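/- On the elliptic curve E, with P = (1,4), the ramification points of the Belyi map are the following multiples of P: −P = (1, −4), 4·P = (6, 16), and (−4)·P = (6, −16) in the group E(ℚ). -/

import Mathlib

/-- The elliptic curve `E : y² = x³ + 5x + 10` (curve 400H1 in Cremona's tables),
given as a Weierstrass curve over `ℚ` with `a₁ = a₂ = a₃ = 0`, `a₄ = 5`, `a₆ = 10`. -/
def E : WeierstrassCurve.Affine ℚ := { a₁ := 0, a₂ := 0, a₃ := 0, a₄ := 5, a₆ := 10 }

lemma hP : E.Nonsingular 1 4 := by
  simp [E, WeierstrassCurve.Affine.nonsingular_iff, WeierstrassCurve.Affine.equation_iff]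
  norm_num

lemma hP' : E.Nonsingular 1 (-4) := by
  simp [E, WeierstrassCurve.Affine.nonsingular_iff, WeierstrassCurve.Affine.equation_iff]
  norm_num

lemma hQ : E.Nonsingular 6 16 := by
  simp [E, WeierstrassCurve.Affine.nonsingular_iff, WeierstrassCurve.Affine.equation_iff]
  norm_num

lemma hQ' : E.Nonsingular 6 (-16) := by
  simp [E, WeierstrassCurve.Affine.nonsingular_iff, WeierstrassCurve.Affine.equation_iff]
  norm_num

/-- The rational point `P = (1, 4)` on `E`. -/
noncomputable def P : E.Point := .some _ _ hP

lemma some_eq {x₁ y₁ x₂ y₂ : ℚ} (h₁ : E.Nonsingular x₁ y₁) (hx : x₁ = x₂) (hy : y₁ = y₂)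
    (h₂ : E.Nonsingular x₂ y₂) :
    WeierstrassCurve.Affine.Point.some _ _ h₁ = WeierstrassCurve.Affine.Point.some _ _ h₂ := by
  subst hx; subst hy; rfl

lemma h2 : E.Nonsingular (-1) (-2) := by
  simp [E, WeierstrassCurve.Affine.nonsingular_iff, WeierstrassCurve.Affine.equation_iff]
  norm_num

lemma slope11 : E.slope 1 1 4 4 = 1 := by
  rw [WeierstrassCurve.Affine.slope_of_Y_ne rfl (by norm_num [E])]
  norm_num [E]

lemma P_add_P : P + P = WeierstrassCurve.Affine.Point.some _ _ h2 := by
  rw [P, WeierstrassCurve.Affine.Point.add_self_of_Y_ne (by norm_num [E])]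
  exact some_eq _ (by norm_num [slope11, E]) (by norm_num [slope11, E, WeierstrassCurve.Affine.addY, WeierstrassCurve.Affine.negAddY, WeierstrassCurve.Affine.negY, WeierstrassCurve.Affine.addX]) h2

lemma slopeQ : E.slope (-1) (-1) (-2) (-2) = -2 := by
  rw [WeierstrassCurve.Affine.slope_of_Y_ne rfl (by norm_num [E])]
  norm_num [E]

lemma Q_add_Q : (WeierstrassCurve.Affine.Point.some _ _ h2) + .some _ _ h2 = .some _ _ hQ := by
  rw [WeierstrassCurve.Affine.Point.add_self_of_Y_ne (by norm_num [E])]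
  exact some_eq _ (by norm_num [slopeQ, E]) (by norm_num [slopeQ, E, WeierstrassCurve.Affine.addY, WeierstrassCurve.Affine.negAddY, WeierstrassCurve.Affine.negY, WeierstrassCurve.Affine.addX]) hQ

lemma four_P : (4 : ℤ) • P = WeierstrassCurve.Affine.Point.some _ _ hQ := by
  have : (4 : ℤ) • P = (P + P) + (P + P) := by abel
  rw [this, P_add_P, Q_add_Q]

/-- On `E`, the ramification points of the Belyi map are the following multiples of
`P = (1, 4)`: `−P = (1, −4)`, `4 • P = (6, 16)` and `(−4) • P = (6, −16)` in `E(ℚ)`. -/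
theorem cusps_are_multiples_of_P :
    -P = .some _ _ hP' ∧ (4 : ℤ) • P = .some _ _ hQ ∧ (-4 : ℤ) • P = .some _ _ hQ' := by
  refine ⟨?_, four_P, ?_⟩
  · rw [P, WeierstrassCurve.Affine.Point.neg_some]
    exact some_eq _ rfl (by norm_num [E]) hP'
  · rw [show (-4 : ℤ) = -(4:ℤ) by norm_num, neg_smul, four_P,
      WeierstrassCurve.Affine.Point.neg_some]
    exact some_eq _ rfl (by norm_num [E]) hQ'
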